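/- Let n be a positive integer, a ∈ ℂ \ {0}, and α_k = -2^(k-1) a^k binom(n,k) for 1 ≤ k ≤ n, with α_k = 0 for k > n. Then for each m with 1 ≤ m ≤ n, det[(α_{i+j-1})_{i,j=1}^m] = (-1)^(m(m+1)/2) a^(m²) 2^(m(m-1)) binom(n,m) ∏_{k=0}^{m-1} binom(n+k, n-k) / binom(m+k, m-k). -/

import Mathlib

open Finset Matrix Polynomial

private lemma fact_mul_prod (a b : ℕ) :
    a.factorial * ∏ u ∈ Finset.range b, (a + 1 + u) = (a + b).factorial := by
  induction b with
  | zero => simp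
  | succ b ih =>
      rw [Finset.prod_range_succ, ← mul_assoc, ih, ← Nat.add_assoc, Nat.factorial_succ]
      ring

private lemma sum_choose_conv (x y c m : ℕ) (hxm : x < m) :
    ∑ t ∈ Finset.range m, x.choose t * y.choose (c + t) = (x + y).choose (x + c) := by
  have h0 : ∑ t ∈ Finset.range m, x.choose t * y.choose (c + t)
      = ∑ t ∈ Finset.range (x + 1), x.choose t * y.choose (c + t) := by
    symm
    apply Finset.sum_subset
    · exact Finset.range_subset_range.2 (by omega)
    · intro k _ hk
      simp only [Finset.mem_range] at hk
      simp [Nat.choose_eq_zero_of_lt (by omega : x < k)]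
  rw [h0, ← Finset.sum_range_reflect]
  rw [Nat.add_choose_eq, Finset.Nat.sum_antidiagonal_eq_sum_range_succ_mk]
  have h1 : ∑ k ∈ Finset.range (x + c + 1), x.choose k * y.choose (x + c - k)
      = ∑ k ∈ Finset.range (x + 1), x.choose k * y.choose (x + c - k) := by
    symm
    apply Finset.sum_subset
    · exact Finset.range_subset_range.2 (by omega)
    · intro k _ hk
      simp only [Finset.mem_range] at hk
      simp [Nat.choose_eq_zero_of_lt (by omega : x < k)]
  rw [h1]
  apply Finset.sum_congr rfl
  intro j hj
  simp only [Finset.mem_range] at hj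
  have hj' : j ≤ x := by omega
  rw [show x + 1 - 1 - j = x - j from by omega, Nat.choose_symm hj',
    show c + (x - j) = x + c - j from by omega]

private lemma prod_range_sub_fact (m : ℕ) :
    (∏ i ∈ Finset.range m, ((m : ℂ) - (i : ℂ))) = (Nat.factorial m : ℂ) := by
  have h : ∀ i ∈ Finset.range m, ((m : ℂ) - (i : ℂ)) = ((m - i : ℕ) : ℂ) := by
    intro i hi
    simp only [Finset.mem_range] at hi
    rw [Nat.cast_sub hi.le]
  rw [Finset.prod_congr rfl h, ← Nat.cast_prod, ← Nat.descFactorial_eq_prod_range,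
    Nat.descFactorial_self]

private lemma vprodT (m : ℕ) :
    (∏ j ∈ Finset.range m, ∏ i ∈ Finset.range j, ((j : ℂ) - (i : ℂ)))
      = ∏ k ∈ Finset.range m, (Nat.factorial k : ℂ) := by
  induction m with
  | zero => simp
  | succ m ih => rw [Finset.prod_range_succ, ih, Finset.prod_range_succ, prod_range_sub_fact]

private lemma vprod (m : ℕ) :
    (∏ i : Fin m, ∏ j ∈ Finset.Ioi i, (((j : ℕ) : ℂ) - ((i : ℕ) : ℂ)))
      = ∏ k ∈ Finset.range m, (Nat.factorial k : ℂ) := by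
  rw [Finset.prod_comm' (t' := Finset.univ) (s' := fun j => Finset.Iio j)
    (by intro x y; simp [Finset.mem_Ioi, Finset.mem_Iio])]
  rw [← vprodT m, ← Fin.prod_univ_eq_prod_range]
  apply Finset.prod_congr rfl
  intro j _
  rw [show ∏ i ∈ Finset.range (j : ℕ), (((j : ℕ) : ℂ) - (i : ℂ))
        = ∏ i ∈ (Finset.Iio j).map Fin.valEmbedding, (((j : ℕ) : ℂ) - (i : ℂ)) from by
      rw [Fin.map_valEmbedding_Iio, Nat.Iio_eq_range], Finset.prod_map]
  rfl

private lemma detJ (m : ℕ) :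
    Matrix.det (Matrix.of fun i j : Fin m => if (i : ℕ) + (j : ℕ) = m - 1 then (1 : ℂ) else 0)
      = (-1) ^ (∑ i ∈ Finset.range m, i) := by
  induction m with
  | zero => simp
  | succ m ih =>
      rw [Matrix.det_succ_row_zero, Finset.sum_range_succ, Fintype.sum_eq_single (Fin.last m)]
      · have hminor : (Matrix.of fun i j : Fin (m+1) =>
            if (i : ℕ) + (j : ℕ) = m + 1 - 1 then (1 : ℂ) else 0).submatrix
            Fin.succ (Fin.last m).succAbove
            = Matrix.of fun i j : Fin m => if (i : ℕ) + (j : ℕ) = m - 1 then (1 : ℂ) else 0 := by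
          ext i j
          simp only [Matrix.submatrix_apply, Fin.succAbove_last, Matrix.of_apply, Fin.val_succ,
            Fin.coe_castSucc]
          have := i.isLt
          exact if_congr (by omega) rfl rfl
        rw [hminor, ih]
        simp only [Matrix.of_apply, Fin.val_zero, Fin.val_last]
        simp only [show 0 + m = m + 1 - 1 from by omega, ↓reduceIte, pow_add]
        ring
      · intro j hj
        have hjv : (j : ℕ) < m := by
          have := j.isLt
          rcases Nat.lt_or_ge (j : ℕ) m with h | h
          · exact h
          · exfalso; apply hj; apply Fin.ext; simp only [Fin.val_last]; omega
        simp only [Matrix.of_apply, Fin.val_zero]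
        simp only [show ¬ (0 + (j : ℕ) = m + 1 - 1) from by omega, ↓reduceIte]
        ring

/-! ### Matrices -/

private def Mmat (n m : ℕ) : Matrix (Fin m) (Fin m) ℂ :=
  Matrix.of fun i j => (n.choose ((i : ℕ) + (j : ℕ) + 1) : ℂ)

private def Pmat (m : ℕ) : Matrix (Fin m) (Fin m) ℂ :=
  Matrix.of fun i j => ((i : ℕ).choose (j : ℕ) : ℂ)

private def N1mat (n m : ℕ) : Matrix (Fin m) (Fin m) ℂ :=
  Matrix.of fun i j => ((((i : ℕ) + n).choose ((i : ℕ) + ((j : ℕ) + 1))) : ℂ)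

private def N2mat (n m : ℕ) : Matrix (Fin m) (Fin m) ℂ :=
  Matrix.of fun i j => ((((j : ℕ) + ((i : ℕ) + n)).choose ((j : ℕ) + ((i : ℕ) + 1))) : ℂ)

private def Vmat (n m : ℕ) : Matrix (Fin m) (Fin m) ℂ :=
  Matrix.of fun i t => (((n + (i : ℕ)).choose (n - 1 - (t : ℕ))) : ℂ)

private def Wmat (m : ℕ) : Matrix (Fin m) (Fin m) ℂ :=
  Matrix.of fun t j => ((j : ℕ).choose (t : ℕ) : ℂ)

private lemma detP (m : ℕ) : (Pmat m).det = 1 := by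
  have ht : (Pmat m).BlockTriangular OrderDual.toDual := by
    intro i j h
    have : (i : ℕ) < (j : ℕ) := h
    simp [Pmat, Nat.choose_eq_zero_of_lt this]
  rw [Matrix.det_of_lowerTriangular _ ht]
  simp [Pmat]

private lemma detW (m : ℕ) : (Wmat m).det = 1 := by
  have ht : (Wmat m).BlockTriangular id := by
    intro i j h
    have : (j : ℕ) < (i : ℕ) := h
    simp [Wmat, Nat.choose_eq_zero_of_lt this]
  rw [Matrix.det_of_upperTriangular ht]
  simp [Wmat]

private lemma step1 (n m : ℕ) : Pmat m * Mmat n m = N1mat n m := by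
  ext i j
  rw [Matrix.mul_apply]
  simp only [Mmat, Pmat, N1mat, Matrix.of_apply]
  rw [← sum_choose_conv (i : ℕ) n ((j : ℕ) + 1) m i.isLt, Nat.cast_sum,
    ← Fin.sum_univ_eq_sum_range (fun t => (((i : ℕ).choose t * n.choose ((j : ℕ) + 1 + t) : ℕ) : ℂ)) m]
  apply Finset.sum_congr rfl
  intro t _
  rw [show (t : ℕ) + (j : ℕ) + 1 = ((j : ℕ) + 1) + (t : ℕ) from by omega]
  push_cast
  ring

private lemma step2 (n m : ℕ) : N1mat n m * (Pmat m)ᵀ = N2mat n m := by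
  ext i j
  rw [Matrix.mul_apply]
  simp only [N1mat, N2mat, Pmat, Matrix.of_apply, Matrix.transpose_apply]
  rw [← sum_choose_conv (j : ℕ) ((i : ℕ) + n) ((i : ℕ) + 1) m j.isLt, Nat.cast_sum,
    ← Fin.sum_univ_eq_sum_range
      (fun t => (((j : ℕ).choose t * ((i : ℕ) + n).choose ((i : ℕ) + 1 + t) : ℕ) : ℂ)) m]
  apply Finset.sum_congr rfl
  intro t _
  rw [show (i : ℕ) + ((t : ℕ) + 1) = (i : ℕ) + 1 + (t : ℕ) from by omega]
  push_cast
  ring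

private lemma step3 (n m : ℕ) (hmn : m ≤ n) : Vmat n m * Wmat m = N2mat n m := by
  ext i j
  rw [Matrix.mul_apply]
  simp only [Vmat, Wmat, N2mat, Matrix.of_apply]
  have hch : ∀ t : Fin m, (n + (i : ℕ)).choose (n - 1 - (t : ℕ))
      = (n + (i : ℕ)).choose ((i : ℕ) + 1 + (t : ℕ)) := by
    intro t
    have ht : (t : ℕ) < m := t.isLt
    rw [show n - 1 - (t : ℕ) = (n + (i : ℕ)) - ((i : ℕ) + 1 + (t : ℕ)) from by omega]
    exact Nat.choose_symm (by omega)
  have h2 : ((j : ℕ) + ((i : ℕ) + n)).choose ((j : ℕ) + ((i : ℕ) + 1))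
      = ((j : ℕ) + (n + (i : ℕ))).choose ((j : ℕ) + ((i : ℕ) + 1)) := by
    rw [Nat.add_comm n (i : ℕ)]
  rw [h2, ← sum_choose_conv (j : ℕ) (n + (i : ℕ)) ((i : ℕ) + 1) m j.isLt, Nat.cast_sum,
    ← Fin.sum_univ_eq_sum_range
      (fun t => (((j : ℕ).choose t * (n + (i : ℕ)).choose ((i : ℕ) + 1 + t) : ℕ) : ℂ)) m]
  apply Finset.sum_congr rfl
  intro t _
  rw [hch t]
  push_cast
  ring

/-! ### The polynomial factorisation of `Vmat` -/

private noncomputable def qpol (m : ℕ) (t : Fin m) : Polynomial ℂ :=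
  ∏ u ∈ Finset.range (m - 1 - (t : ℕ)), (Polynomial.X + Polynomial.C (((t : ℕ) + 2 + u : ℕ) : ℂ))

private noncomputable def Gmat (m : ℕ) : Matrix (Fin m) (Fin m) ℂ :=
  Matrix.of fun i t => (qpol m t).eval ((i : ℕ) : ℂ)

private noncomputable def Hmat (m : ℕ) : Matrix (Fin m) (Fin m) ℂ :=
  Matrix.of fun i t => (qpol m (Fin.rev t)).eval ((i : ℕ) : ℂ)

private noncomputable def Jmat (m : ℕ) : Matrix (Fin m) (Fin m) ℂ :=
  Matrix.of fun t j => if (t : ℕ) + (j : ℕ) = m - 1 then (1 : ℂ) else 0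

private lemma qpol_monic (m : ℕ) (t : Fin m) : (qpol m t).Monic :=
  monic_prod_of_monic _ _ fun u _ => monic_X_add_C _

private lemma qpol_deg (m : ℕ) (t : Fin m) : (qpol m t).natDegree = m - 1 - (t : ℕ) := by
  rw [qpol, natDegree_prod_of_monic _ _ (fun u _ => monic_X_add_C _)]
  simp only [natDegree_X_add_C, Finset.sum_const, smul_eq_mul, mul_one, Finset.card_range]

private lemma detH (m : ℕ) : (Hmat m).det = ∏ k ∈ Finset.range m, (Nat.factorial k : ℂ) := by
  have hdeg : ∀ t : Fin m, (qpol m (Fin.rev t)).natDegree = (t : ℕ) := by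
    intro t
    rw [qpol_deg, Fin.val_rev]
    have := t.isLt
    omega
  have h := Matrix.det_eval_matrixOfPolynomials_eq_det_vandermonde
    (fun i : Fin m => ((i : ℕ) : ℂ)) (fun t => qpol m (Fin.rev t)) hdeg
    (fun t => qpol_monic m (Fin.rev t))
  rw [Matrix.det_vandermonde] at h
  have hH : Hmat m = Matrix.of fun i j : Fin m => (qpol m (Fin.rev j)).eval ((i : ℕ) : ℂ) := rfl
  rw [hH, ← h, vprod m]

private lemma HJ (m : ℕ) : Hmat m * Jmat m = Gmat m := by
  ext i j
  rw [Matrix.mul_apply, Finset.sum_eq_single (Fin.rev j)]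
  · have h1 : Jmat m (Fin.rev j) j = 1 := by
      have := j.isLt
      simp only [Jmat, Matrix.of_apply, Fin.val_rev]
      rw [if_pos (by omega)]
    rw [h1, mul_one]
    show (qpol m (Fin.rev (Fin.rev j))).eval _ = _
    rw [Fin.rev_rev]
    rfl
  · intro t _ hne
    have h0 : Jmat m t j = 0 := by
      simp only [Jmat, Matrix.of_apply]
      rw [if_neg]
      intro hc
      apply hne
      apply Fin.ext
      rw [Fin.val_rev]
      have := j.isLt
      have := t.isLt
      omega
    rw [h0, mul_zero]
  · intro h
    exact absurd (Finset.mem_univ _) h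

private lemma detG (m : ℕ) :
    (Gmat m).det = (∏ k ∈ Finset.range m, (Nat.factorial k : ℂ)) *
      (-1) ^ (∑ i ∈ Finset.range m, i) := by
  rw [← HJ, Matrix.det_mul, detH]
  have : Jmat m = Matrix.of fun i j : Fin m =>
      if (i : ℕ) + (j : ℕ) = m - 1 then (1 : ℂ) else 0 := rfl
  rw [this, detJ]

private lemma natkey (n m i t : ℕ) (ht : t < m) (hmn : m ≤ n) :
    (n + i).choose (n - 1 - t) * ((m + i).factorial * (n - 1 - t).factorial)
      = (n + i).factorial * ∏ u ∈ Finset.range (m - 1 - t), (i + t + 2 + u) := by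
  have e2 : (i + t + 1).factorial * ∏ u ∈ Finset.range (m - 1 - t), (i + t + 2 + u)
      = (i + m).factorial := by
    have h := fact_mul_prod (i + t + 1) (m - 1 - t)
    have harg : ∀ u : ℕ, i + t + 1 + 1 + u = i + t + 2 + u := fun u => by omega
    simp only [harg] at h
    rwa [show i + t + 1 + (m - 1 - t) = i + m from by omega] at h
  have e1 : (n + i).choose (n - 1 - t) * (n - 1 - t).factorial * (i + t + 1).factorial
      = (n + i).factorial := by
    have h := Nat.choose_mul_factorial_mul_factorial (show n - 1 - t ≤ n + i from by omega)
    rwa [show n + i - (n - 1 - t) = i + t + 1 from by omega] at h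
  rw [Nat.add_comm m i, ← e2, ← e1]
  ring

private noncomputable def Bmat (n m : ℕ) : Matrix (Fin m) (Fin m) ℂ :=
  Matrix.of fun i t => (((n - 1 - (t : ℕ)).factorial : ℂ))⁻¹ * Gmat m i t

private lemma Vfact (n m : ℕ) (hmn : m ≤ n) :
    Vmat n m = Matrix.of fun i t : Fin m =>
          (((n + (i : ℕ)).factorial : ℂ) / ((m + (i : ℕ)).factorial : ℂ)) * Bmat n m i t := by
  ext i t
  simp only [Vmat, Matrix.of_apply, Bmat, Gmat]
  have hE : (qpol m t).eval ((i : ℕ) : ℂ)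
      = ((∏ u ∈ Finset.range (m - 1 - (t : ℕ)), ((i : ℕ) + (t : ℕ) + 2 + u) : ℕ) : ℂ) := by
    rw [qpol, Polynomial.eval_prod, Nat.cast_prod]
    apply Finset.prod_congr rfl
    intro u _
    rw [Polynomial.eval_add, Polynomial.eval_X, Polynomial.eval_C]
    push_cast
    ring
  rw [hE]
  have hk := natkey n m (i : ℕ) (t : ℕ) t.isLt hmn
  have ckey := congrArg (fun x : ℕ => (x : ℂ)) hk
  push_cast at ckey
  have hfm : ((m + (i : ℕ)).factorial : ℂ) ≠ 0 := Nat.cast_ne_zero.2 (Nat.factorial_ne_zero _)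
  have hft : (((n - 1 - (t : ℕ)).factorial : ℂ)) ≠ 0 := Nat.cast_ne_zero.2 (Nat.factorial_ne_zero _)
  field_simp
  push_cast
  linear_combination ckey

private lemma detV (n m : ℕ) (hmn : m ≤ n) :
    (Vmat n m).det
      = (∏ i : Fin m, (((n + (i : ℕ)).factorial : ℂ) / ((m + (i : ℕ)).factorial : ℂ)))
        * ((∏ t : Fin m, (((n - 1 - (t : ℕ)).factorial : ℂ))⁻¹)
          * ((∏ k ∈ Finset.range m, (Nat.factorial k : ℂ)) * (-1) ^ (∑ i ∈ Finset.range m, i))) := by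
  rw [Vfact n m hmn, Matrix.det_mul_column,
    show Bmat n m = Matrix.of (fun i t : Fin m => (((n - 1 - (t : ℕ)).factorial : ℂ))⁻¹ * Gmat m i t)
      from rfl,
    Matrix.det_mul_row, detG]

private lemma detM (n m : ℕ) (hmn : m ≤ n) : (Mmat n m).det = (Vmat n m).det := by
  have e1 : Pmat m * Mmat n m * (Pmat m)ᵀ = N2mat n m := by rw [step1, step2]
  have e2 : (N2mat n m).det = (Mmat n m).det := by
    rw [← e1, Matrix.det_mul, Matrix.det_mul, Matrix.det_transpose, detP]
    ring
  have e3 : (N2mat n m).det = (Vmat n m).det := by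
    rw [← step3 n m hmn, Matrix.det_mul, detW, mul_one]
  rw [← e2, e3]

private lemma binom_ratio (n m k : ℕ) (hk : k < m) (hmn : m ≤ n) :
    ((n + k).choose (n - k) : ℂ) / ((m + k).choose (m - k) : ℂ)
      = (((n + k).factorial : ℂ) * ((m - k).factorial : ℂ))
        / (((n - k).factorial : ℂ) * ((m + k).factorial : ℂ)) := by
  have e1 : (n + k).choose (n - k) * (n - k).factorial * (2 * k).factorial
      = (n + k).factorial := by
    have h := Nat.choose_mul_factorial_mul_factorial (show n - k ≤ n + k from by omega)
    rwa [show n + k - (n - k) = 2 * k from by omega] at h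
  have e2 : (m + k).choose (m - k) * (m - k).factorial * (2 * k).factorial
      = (m + k).factorial := by
    have h := Nat.choose_mul_factorial_mul_factorial (show m - k ≤ m + k from by omega)
    rwa [show m + k - (m - k) = 2 * k from by omega] at h
  have c1 := congrArg (fun x : ℕ => (x : ℂ)) e1
  have c2 := congrArg (fun x : ℕ => (x : ℂ)) e2
  push_cast at c1 c2
  have hch2 : (((m + k).choose (m - k) : ℕ) : ℂ) ≠ 0 :=
    Nat.cast_ne_zero.2 (Nat.ne_of_gt (Nat.choose_pos (by omega)))
  have f1 : ((n - k).factorial : ℂ) ≠ 0 := Nat.cast_ne_zero.2 (Nat.factorial_ne_zero _)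
  have f2 : ((m - k).factorial : ℂ) ≠ 0 := Nat.cast_ne_zero.2 (Nat.factorial_ne_zero _)
  have f3 : ((m + k).factorial : ℂ) ≠ 0 := Nat.cast_ne_zero.2 (Nat.factorial_ne_zero _)
  have f4 : ((2 * k).factorial : ℂ) ≠ 0 := Nat.cast_ne_zero.2 (Nat.factorial_ne_zero _)
  rw [div_eq_div_iff (by exact hch2) (by exact mul_ne_zero f1 f3)]
  have key : (((n + k).choose (n - k) : ℕ) : ℂ) * (((n - k).factorial : ℂ) * ((m + k).factorial : ℂ))
      * ((2 * k).factorial : ℂ)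
      = ((n + k).factorial : ℂ) * ((m - k).factorial : ℂ) * (((m + k).choose (m - k) : ℕ) : ℂ)
      * ((2 * k).factorial : ℂ) := by
    linear_combination (((m + k).factorial : ℂ)) * c1
      - (((n + k).factorial : ℂ)) * c2 + (((n+k).choose (n-k) : ℂ) * ((m+k).factorial : ℂ)
        - ((n+k).factorial : ℂ) * ((m+k).choose (m-k) : ℂ)) * (0 : ℂ)
  have := mul_right_cancel₀ f4 key
  linear_combination this

private lemma prod_binom_ratio (n m : ℕ) (hmn : m ≤ n) :
    ∏ k ∈ Finset.range m, (((n + k).choose (n - k) : ℂ) / ((m + k).choose (m - k) : ℂ))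
      = ((∏ k ∈ Finset.range m, ((n + k).factorial : ℂ))
          * ∏ k ∈ Finset.range m, ((m - k).factorial : ℂ))
        / ((∏ k ∈ Finset.range m, ((n - k).factorial : ℂ))
          * ∏ k ∈ Finset.range m, ((m + k).factorial : ℂ)) := by
  rw [← Finset.prod_mul_distrib, ← Finset.prod_mul_distrib, ← Finset.prod_div_distrib]
  apply Finset.prod_congr rfl
  intro k hk
  simp only [Finset.mem_range] at hk
  exact binom_ratio n m k hk hmn

private lemma prod_fact_shift (n m : ℕ) (hmn : m ≤ n) :
    (∏ k ∈ Finset.range m, (n - k).factorial) * (n - m).factorial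
      = n.factorial * ∏ k ∈ Finset.range m, (n - 1 - k).factorial := by
  have t1 := Finset.prod_range_succ (fun k => (n - k).factorial) m
  have t2 := Finset.prod_range_succ' (fun k => (n - k).factorial) m
  have t3 : ∏ i ∈ Finset.range m, (n - (i + 1)).factorial
      = ∏ i ∈ Finset.range m, (n - 1 - i).factorial :=
    Finset.prod_congr rfl fun k _ => by rw [show n - (k + 1) = n - 1 - k from by omega]
  rw [t1, t3] at t2
  rw [t2, Nat.sub_zero]
  exact Nat.mul_comm _ _

private lemma prod_fact_shift_m (m : ℕ) :
    ∏ k ∈ Finset.range m, (m - k).factorial = m.factorial * ∏ k ∈ Finset.range m, k.factorial := by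
  have t1 := Finset.prod_range_succ (fun k => (m - k).factorial) m
  have t2 := Finset.prod_range_succ' (fun k => (m - k).factorial) m
  have t3 : ∏ i ∈ Finset.range m, (m - (i + 1)).factorial
      = ∏ i ∈ Finset.range m, i.factorial := by
    rw [show (∏ i ∈ Finset.range m, (m - (i + 1)).factorial)
        = ∏ i ∈ Finset.range m, (m - 1 - i).factorial from
      Finset.prod_congr rfl fun k _ => by rw [show m - (k + 1) = m - 1 - k from by omega]]
    exact Finset.prod_range_reflect (fun k => k.factorial) m
  rw [t1, t3] at t2
  simp only [Nat.sub_self, Nat.factorial_zero, mul_one, Nat.sub_zero] at t2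
  rw [t2]
  exact Nat.mul_comm _ _

private lemma detMV (n m : ℕ) (hmn : m ≤ n) :
    (Mmat n m).det
      = (∏ i : Fin m, (((n + (i : ℕ)).factorial : ℂ) / ((m + (i : ℕ)).factorial : ℂ)))
        * ((∏ t : Fin m, (((n - 1 - (t : ℕ)).factorial : ℂ))⁻¹)
          * ((∏ k ∈ Finset.range m, (Nat.factorial k : ℂ)) * (-1) ^ (∑ i ∈ Finset.range m, i))) := by
  rw [detM n m hmn, detV n m hmn]

set_option maxHeartbeats 1000000 in
theorem hankel_alpha_det (n : ℕ) (hn : 0 < n) (a : ℂ) (ha : a ≠ 0)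
    (α : ℕ → ℂ)
    (hα : ∀ k, 1 ≤ k → k ≤ n → α k = -(2 : ℂ) ^ (k - 1) * a ^ k * (n.choose k : ℂ))
    (hα' : ∀ k, n < k → α k = 0)
    (m : ℕ) (hm1 : 1 ≤ m) (hmn : m ≤ n) :
    Matrix.det (Matrix.of fun i j : Fin m => α ((i : ℕ) + (j : ℕ) + 1)) =
      (-1 : ℂ) ^ (m * (m + 1) / 2) * a ^ (m ^ 2) * 2 ^ (m * (m - 1)) * (n.choose m : ℂ) *
        ∏ k ∈ Finset.range m, ((n + k).choose (n - k) : ℂ) / ((m + k).choose (m - k) : ℂ) := by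
  classical
  have hA : (Matrix.of fun i j : Fin m => α ((i : ℕ) + (j : ℕ) + 1))
      = Matrix.of (fun i j : Fin m =>
          (-(1/2 : ℂ) * (2 * a) ^ ((i : ℕ) + 1)) *
            (Matrix.of (fun i j : Fin m => ((2 * a) : ℂ) ^ ((j : ℕ)) * Mmat n m i j)) i j) := by
    ext i j
    simp only [Matrix.of_apply, Mmat]
    by_cases h : (i : ℕ) + (j : ℕ) + 1 ≤ n
    · rw [hα _ (by omega) h,
        show (i : ℕ) + (j : ℕ) + 1 - 1 = (i : ℕ) + (j : ℕ) from by omega]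
      have h2 : (2:ℂ) ≠ 0 := two_ne_zero
      field_simp
      ring
    · rw [hα' _ (by omega), Nat.choose_eq_zero_of_lt (by omega)]
      simp
  rw [hA, Matrix.det_mul_column, Matrix.det_mul_row, detMV n m hmn]
  rw [Fin.prod_univ_eq_prod_range (fun i => -(1/2:ℂ) * (2*a)^(i+1)) m,
    Fin.prod_univ_eq_prod_range (fun j => ((2*a):ℂ)^j) m,
    Fin.prod_univ_eq_prod_range (fun i => (((n+i).factorial : ℂ) / ((m+i).factorial : ℂ))) m,
    Fin.prod_univ_eq_prod_range (fun t => (((n-1-t).factorial : ℂ))⁻¹) m]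
  rw [Finset.prod_mul_distrib, Finset.prod_const, Finset.card_range,
    Finset.prod_pow_eq_pow_sum, Finset.prod_pow_eq_pow_sum,
    Finset.prod_div_distrib, Finset.prod_inv_distrib]
  have hgauss := Finset.sum_range_id_mul_two m
  have hmm : m * (m - 1) + m = m * m := by
    cases m with
    | zero => rfl
    | succ k => simp [Nat.succ_sub_one]; ring
  have hmp : m * (m + 1) = m * (m - 1) + 2 * m := by
    cases m with
    | zero => rfl
    | succ k => simp [Nat.succ_sub_one]; ring
  have hsum1 : ∑ i ∈ Finset.range m, (i + 1) = (∑ i ∈ Finset.range m, i) + m := by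
    rw [Finset.sum_add_distrib, Finset.sum_const, Finset.card_range, smul_eq_mul, mul_one]
  have hexp1 : m * (m + 1) / 2 = m + ∑ i ∈ Finset.range m, i := by omega
  have hexp2 : m ^ 2 = (∑ i ∈ Finset.range m, i) + ((∑ i ∈ Finset.range m, i) + m) := by
    have hp : m ^ 2 = m * m := by ring
    omega
  have hexp3 : m * (m - 1) = (∑ i ∈ Finset.range m, i) + ∑ i ∈ Finset.range m, i := by omega
  rw [hsum1, hexp1, hexp2, hexp3, prod_binom_ratio n m hmn]
  have hX6 : (∏ k ∈ Finset.range m, ((m - k).factorial : ℂ))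
      = (m.factorial : ℂ) * ∏ k ∈ Finset.range m, (k.factorial : ℂ) := by
    have := congrArg (fun x : ℕ => (x : ℂ)) (prod_fact_shift_m m)
    push_cast at this
    exact this
  have hfnm : ((n - m).factorial : ℂ) ≠ 0 := Nat.cast_ne_zero.2 (Nat.factorial_ne_zero _)
  have hfn : ((n.factorial : ℕ) : ℂ) ≠ 0 := Nat.cast_ne_zero.2 (Nat.factorial_ne_zero _)
  have hfm : ((m.factorial : ℕ) : ℂ) ≠ 0 := Nat.cast_ne_zero.2 (Nat.factorial_ne_zero _)
  have hX5 : (∏ k ∈ Finset.range m, ((n - k).factorial : ℂ))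
      = (n.factorial : ℂ) * (∏ k ∈ Finset.range m, ((n - 1 - k).factorial : ℂ))
        / ((n - m).factorial : ℂ) := by
    rw [eq_div_iff hfnm]
    have := congrArg (fun x : ℕ => (x : ℂ)) (prod_fact_shift n m hmn)
    push_cast at this
    linear_combination this
  have hC : ((n.choose m : ℕ) : ℂ)
      = (n.factorial : ℂ) / ((m.factorial : ℂ) * ((n - m).factorial : ℂ)) := by
    rw [eq_div_iff (mul_ne_zero hfm hfnm)]
    have := congrArg (fun x : ℕ => (x : ℂ)) (Nat.choose_mul_factorial_mul_factorial hmn)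
    push_cast at this
    linear_combination this
  have hhalf : (-(1/2 : ℂ)) ^ m = (-1 : ℂ) ^ m * ((2 : ℂ) ^ m)⁻¹ := by
    rw [show (-(1/2 : ℂ)) = (-1) * (2 : ℂ)⁻¹ from by norm_num, mul_pow, inv_pow]
  rw [hX5, hC, hX6, hhalf, mul_pow 2 a, mul_pow 2 a]
  have hp1 : (∏ k ∈ Finset.range m, ((m + k).factorial : ℂ)) ≠ 0 :=
    Finset.prod_ne_zero_iff.2 fun k _ => Nat.cast_ne_zero.2 (Nat.factorial_ne_zero _)
  have hp2 : (∏ k ∈ Finset.range m, ((n - 1 - k).factorial : ℂ)) ≠ 0 :=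
    Finset.prod_ne_zero_iff.2 fun k _ => Nat.cast_ne_zero.2 (Nat.factorial_ne_zero _)
  have h2m : ((2 : ℂ) ^ m) ≠ 0 := pow_ne_zero _ two_ne_zero
  field_simp
  ring
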